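/- Let Q1 and Q2 be probability measures on the real line. Then Q1 ≤_lr Q2 if and only if the set ROC(Q1,Q2) is concave in the following sense: whenever (a1,a2), (b1,b2), (c1,c2) are three pairwise different points of ROC(Q1,Q2) with a1 ≤ b1 ≤ c1 and a2 ≤ b2 ≤ c2, one has (b2 − a2)·(c1 − b1) ≥ (c2 − b2)·(b1 − a1). -/

import Mathlib

open MeasureTheory Set Filter
open scoped ENNReal Topology

noncomputable section

/-- `g` is a (measurable, nonnegative) density of `Q` with respect to `μ`,
i.e. `Q B = ∫_B g dμ` for all Borel sets `B`. -/
def IsDensity (Q μ : Measure ℝ) (g : ℝ → ENNReal) : Prop :=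
  Measurable g ∧ ∀ B : Set ℝ, MeasurableSet B → Q B = ∫⁻ x in B, g x ∂μ

/-- Likelihood ratio order `Q1 ≤_lr Q2`: there exist a σ-finite measure `μ` and densities
`g1 = dQ1/dμ`, `g2 = dQ2/dμ` such that the ratio `g2/g1` (with values in `[0,∞]`)
is nondecreasing on the set `{g1 + g2 > 0}`. -/
def LikelihoodRatioLE (Q1 Q2 : Measure ℝ) : Prop :=
  ∃ (μ : Measure ℝ) (g1 g2 : ℝ → ENNReal), SigmaFinite μ ∧
    IsDensity Q1 μ g1 ∧ IsDensity Q2 μ g2 ∧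
    ∀ x y : ℝ, x ≤ y → 0 < g1 x + g2 x → 0 < g1 y + g2 y →
      g2 x / g1 x ≤ g2 y / g1 y

/-- The family of half-lines `(y,∞)`, `[y,∞)`, together with `∅` and `ℝ`. -/
def Halflines : Set (Set ℝ) :=
  {H | (∃ y : ℝ, H = Ioi y) ∨ (∃ y : ℝ, H = Ici y) ∨ H = (∅ : Set ℝ) ∨ H = (univ : Set ℝ)}

/-- The receiver operating characteristic of `(Q1, Q2)`. -/
def ROC (Q1 Q2 : Measure ℝ) : Set (ℝ × ℝ) :=
  {p | ∃ H ∈ Halflines, p = ((Q1 H).toReal, (Q2 H).toReal)}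



namespace StmtAux


lemma halflines_measurable {H : Set ℝ} (h : H ∈ Halflines) : MeasurableSet H := by
  rcases h with ⟨y, rfl⟩ | ⟨y, rfl⟩ | rfl | rfl
  exacts [measurableSet_Ioi, measurableSet_Ici, MeasurableSet.empty, MeasurableSet.univ]

lemma halflines_upward {H : Set ℝ} (h : H ∈ Halflines) {v u : ℝ} (hv : v ∈ H) (huv : v ≤ u) :
    u ∈ H := by
  rcases h with ⟨y, rfl⟩ | ⟨y, rfl⟩ | rfl | rfl
  · exact lt_of_lt_of_le hv huv
  · exact le_trans hv huv
  · exact absurd hv (by simp)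
  · trivial

lemma halflines_comparable {H K : Set ℝ} (hH : H ∈ Halflines) (hK : K ∈ Halflines) :
    H ⊆ K ∨ K ⊆ H := by
  rcases hH with ⟨y, rfl⟩ | ⟨y, rfl⟩ | rfl | rfl
  · rcases hK with ⟨z, rfl⟩ | ⟨z, rfl⟩ | rfl | rfl
    · rcases le_total z y with h | h
      · exact Or.inl (Ioi_subset_Ioi h)
      · exact Or.inr (Ioi_subset_Ioi h)
    · rcases le_or_gt z y with h | h
      · exact Or.inl fun x hx => le_of_lt (lt_of_le_of_lt h hx)
      · exact Or.inr fun x hx => lt_of_lt_of_le h hx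
    · exact Or.inr (empty_subset _)
    · exact Or.inl (subset_univ _)
  · rcases hK with ⟨z, rfl⟩ | ⟨z, rfl⟩ | rfl | rfl
    · rcases le_or_gt y z with h | h
      · exact Or.inr fun x hx => le_trans h (le_of_lt hx)
      · exact Or.inl fun x hx => lt_of_lt_of_le h hx
    · rcases le_total z y with h | h
      · exact Or.inl (Ici_subset_Ici.mpr h)
      · exact Or.inr (Ici_subset_Ici.mpr h)
    · exact Or.inr (empty_subset _)
    · exact Or.inl (subset_univ _)
  · exact Or.inl (empty_subset _)
  · exact Or.inr (subset_univ _)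

lemma tdiff (Q : Measure ℝ) [IsFiniteMeasure Q] {s t : Set ℝ} (h : s ⊆ t)
    (hs : MeasurableSet s) :
    (Q (t \ s)).toReal = (Q t).toReal - (Q s).toReal := by
  rw [measure_diff h hs.nullMeasurableSet (measure_ne_top Q s),
    ENNReal.toReal_sub_of_le (measure_mono h) (measure_ne_top Q t)]


lemma density_top_null {Q μ : Measure ℝ} [IsProbabilityMeasure Q] {g : ℝ → ENNReal}
    (hm : Measurable g) (hd : ∀ B : Set ℝ, MeasurableSet B → Q B = ∫⁻ x in B, g x ∂μ) :
    μ {x | g x = ∞} = 0 := by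
  by_contra hne
  have hmeas : MeasurableSet {x | g x = ∞} := hm (measurableSet_singleton ∞)
  have h1 : (∞ : ENNReal) ≤ Q {x | g x = ∞} := by
    rw [hd _ hmeas]
    calc (∞ : ENNReal) = ∞ * μ {x | g x = ∞} := (ENNReal.top_mul hne).symm
      _ = ∫⁻ _ in {x | g x = ∞}, ∞ ∂μ := (setLIntegral_const _ _).symm
      _ ≤ ∫⁻ x in {x | g x = ∞}, g x ∂μ :=
          setLIntegral_mono' hmeas fun x hx => le_of_eq hx.symm
  exact (measure_ne_top Q _) (top_le_iff.mp h1)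

lemma cross_of_lr {Q1 Q2 : Measure ℝ} [IsProbabilityMeasure Q1] [IsProbabilityMeasure Q2]
    (h : LikelihoodRatioLE Q1 Q2) {L R : Set ℝ} (hL : MeasurableSet L) (hR : MeasurableSet R)
    (hLR : ∀ u ∈ L, ∀ v ∈ R, u < v) :
    Q2 L * Q1 R ≤ Q1 L * Q2 R := by
  obtain ⟨μ, g1, g2, hσ, ⟨hm1, hd1⟩, ⟨hm2, hd2⟩, hmono⟩ := h
  set N : Set ℝ := {x | g1 x = ∞} ∪ {x | g2 x = ∞} with hNdef
  have hNmeas : MeasurableSet N :=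
    (hm1 (measurableSet_singleton ∞)).union (hm2 (measurableSet_singleton ∞))
  have hNnull : μ N = 0 :=
    measure_union_null (density_top_null hm1 hd1) (density_top_null hm2 hd2)
  have hQ1N : Q1 N = 0 := by
    rw [hd1 _ hNmeas]; exact setLIntegral_measure_zero _ _ hNnull
  have hQ2N : Q2 N = 0 := by
    rw [hd2 _ hNmeas]; exact setLIntegral_measure_zero _ _ hNnull
  have hL' : MeasurableSet (L \ N) := hL.diff hNmeas
  have hR' : MeasurableSet (R \ N) := hR.diff hNmeas
  have key : ∀ u ∈ L \ N, ∀ v ∈ R \ N, g2 u * g1 v ≤ g1 u * g2 v := by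
    intro u hu v hv
    have huv := hLR u hu.1 v hv.1
    have hg1u : g1 u ≠ ∞ := fun hh => hu.2 (Or.inl hh)
    have hg2u : g2 u ≠ ∞ := fun hh => hu.2 (Or.inr hh)
    have hg1v : g1 v ≠ ∞ := fun hh => hv.2 (Or.inl hh)
    have hg2v : g2 v ≠ ∞ := fun hh => hv.2 (Or.inr hh)
    rcases eq_or_ne (g2 u) 0 with h20 | h20
    · simp [h20]
    rcases eq_or_ne (g1 v) 0 with h10 | h10
    · simp [h10]
    have hsu : 0 < g1 u + g2 u := by
      have : g2 u ≤ g1 u + g2 u := le_add_self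
      exact lt_of_lt_of_le (pos_iff_ne_zero.mpr h20) this
    have hsv : 0 < g1 v + g2 v :=
      lt_of_lt_of_le (pos_iff_ne_zero.mpr h10) (le_add_right le_rfl)
    have hr := hmono u v huv.le hsu hsv
    rcases eq_or_ne (g1 u) 0 with h1u0 | h1u0
    · exfalso
      rw [h1u0, ENNReal.div_zero h20] at hr
      rcases ENNReal.div_eq_top.mp (top_le_iff.mp hr) with ⟨_, hb⟩ | ⟨ha, _⟩
      · exact h10 hb
      · exact hg2v ha
    · rw [ENNReal.div_le_iff h1u0 hg1u] at hr
      calc g2 u * g1 v ≤ (g2 v / g1 v * g1 u) * g1 v := by gcongr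
        _ = g1 u * (g2 v / g1 v * g1 v) := by ring
        _ = g1 u * g2 v := by rw [ENNReal.div_mul_cancel h10 hg1v]
  have eL2 : Q2 (L \ N) = Q2 L := measure_diff_null hQ2N
  have eL1 : Q1 (L \ N) = Q1 L := measure_diff_null hQ1N
  have eR1 : Q1 (R \ N) = Q1 R := measure_diff_null hQ1N
  have eR2 : Q2 (R \ N) = Q2 R := measure_diff_null hQ2N
  rw [← eL2, ← eR1, ← eL1, ← eR2]
  calc Q2 (L \ N) * Q1 (R \ N)
      = (∫⁻ u in L \ N, g2 u ∂μ) * (∫⁻ v in R \ N, g1 v ∂μ) := by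
        rw [hd2 _ hL', hd1 _ hR']
    _ = ∫⁻ u in L \ N, g2 u * (∫⁻ v in R \ N, g1 v ∂μ) ∂μ :=
        (lintegral_mul_const _ hm2).symm
    _ = ∫⁻ u in L \ N, ∫⁻ v in R \ N, g2 u * g1 v ∂μ ∂μ :=
        lintegral_congr fun u => (lintegral_const_mul _ hm1).symm
    _ ≤ ∫⁻ u in L \ N, ∫⁻ v in R \ N, g1 u * g2 v ∂μ ∂μ :=
        setLIntegral_mono' hL' fun u hu =>
          setLIntegral_mono' hR' fun v hv => key u hu v hv
    _ = ∫⁻ u in L \ N, g1 u * (∫⁻ v in R \ N, g2 v ∂μ) ∂μ :=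
        lintegral_congr fun u => lintegral_const_mul _ hm2
    _ = (∫⁻ u in L \ N, g1 u ∂μ) * (∫⁻ v in R \ N, g2 v ∂μ) :=
        lintegral_mul_const _ hm1
    _ = Q1 (L \ N) * Q2 (R \ N) := by rw [hd1 _ hL', hd2 _ hR']


lemma halflines_lt {H : Set ℝ} (hH : H ∈ Halflines) {u v : ℝ} (hu : u ∉ H) (hv : v ∈ H) :
    u < v := by
  by_contra hc
  exact hu (halflines_upward hH hv (not_lt.mp hc))

lemma forward {Q1 Q2 : Measure ℝ} [IsProbabilityMeasure Q1] [IsProbabilityMeasure Q2]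
    (h : LikelihoodRatioLE Q1 Q2) :
    ∀ a b c : ℝ × ℝ, a ∈ ROC Q1 Q2 → b ∈ ROC Q1 Q2 → c ∈ ROC Q1 Q2 →
      a ≠ b → b ≠ c → a ≠ c →
      a.1 ≤ b.1 → b.1 ≤ c.1 → a.2 ≤ b.2 → b.2 ≤ c.2 →
      (c.2 - b.2) * (b.1 - a.1) ≤ (b.2 - a.2) * (c.1 - b.1) := by
  intro a b c ha hb hc hab hbc hac h11 h12 h21 h22
  obtain ⟨Ha, hHa, rfl⟩ := ha
  obtain ⟨Hb, hHb, rfl⟩ := hb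
  obtain ⟨Hc, hHc, rfl⟩ := hc
  simp only at h11 h12 h21 h22 ⊢
  have hsub : ∀ {H K : Set ℝ}, H ∈ Halflines → K ∈ Halflines →
      (Q1 H).toReal ≤ (Q1 K).toReal → (Q2 H).toReal ≤ (Q2 K).toReal →
      (((Q1 H).toReal, (Q2 H).toReal) : ℝ × ℝ) ≠ ((Q1 K).toReal, (Q2 K).toReal) → H ⊆ K := by
    intro H K hH hK h1 h2 hne
    rcases halflines_comparable hH hK with hs | hs
    · exact hs
    · exfalso; apply hne
      have e1 : (Q1 H).toReal = (Q1 K).toReal :=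
        le_antisymm h1 (ENNReal.toReal_mono (measure_ne_top _ _) (measure_mono hs))
      have e2 : (Q2 H).toReal = (Q2 K).toReal :=
        le_antisymm h2 (ENNReal.toReal_mono (measure_ne_top _ _) (measure_mono hs))
      rw [e1, e2]
  have hab' : Ha ⊆ Hb := hsub hHa hHb h11 h21 hab
  have hbc' : Hb ⊆ Hc := hsub hHb hHc h12 h22 hbc
  have key := cross_of_lr h ((halflines_measurable hHc).diff (halflines_measurable hHb))
    ((halflines_measurable hHb).diff (halflines_measurable hHa))
    (fun u hu v hv => halflines_lt hHb hu.2 hv.1)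
  have key' : (Q2 (Hc \ Hb)).toReal * (Q1 (Hb \ Ha)).toReal ≤
      (Q1 (Hc \ Hb)).toReal * (Q2 (Hb \ Ha)).toReal := by
    have hne : Q1 (Hc \ Hb) * Q2 (Hb \ Ha) ≠ ∞ :=
      ENNReal.mul_ne_top (measure_ne_top _ _) (measure_ne_top _ _)
    have := ENNReal.toReal_mono hne key
    rwa [ENNReal.toReal_mul, ENNReal.toReal_mul] at this
  rw [← tdiff Q2 hbc' (halflines_measurable hHb), ← tdiff Q1 hab' (halflines_measurable hHa),
    ← tdiff Q2 hab' (halflines_measurable hHa), ← tdiff Q1 hbc' (halflines_measurable hHb)]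
  linarith [key']



def ROCConcave (Q1 Q2 : Measure ℝ) : Prop :=
  ∀ a b c : ℝ × ℝ, a ∈ ROC Q1 Q2 → b ∈ ROC Q1 Q2 → c ∈ ROC Q1 Q2 →
    a ≠ b → b ≠ c → a ≠ c →
    a.1 ≤ b.1 → b.1 ≤ c.1 → a.2 ≤ b.2 → b.2 ≤ c.2 →
    (c.2 - b.2) * (b.1 - a.1) ≤ (b.2 - a.2) * (c.1 - b.1)

lemma cross_of_roc {Q1 Q2 : Measure ℝ} [IsProbabilityMeasure Q1] [IsProbabilityMeasure Q2]
    (hroc : ROCConcave Q1 Q2) {A B C : Set ℝ} (hA : A ∈ Halflines) (hB : B ∈ Halflines)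
    (hC : C ∈ Halflines) (hCB : C ⊆ B) (hBA : B ⊆ A) :
    (Q2 (A \ B)).toReal * (Q1 (B \ C)).toReal ≤
      (Q1 (A \ B)).toReal * (Q2 (B \ C)).toReal := by
  by_cases hab : (((Q1 C).toReal, (Q2 C).toReal) : ℝ × ℝ) = ((Q1 B).toReal, (Q2 B).toReal)
  · have e1 : (Q1 (B \ C)).toReal = 0 := by
      rw [tdiff Q1 hCB (halflines_measurable hC)]
      have := congrArg Prod.fst hab; simp only at this; linarith
    have e2 : (Q2 (B \ C)).toReal = 0 := by
      rw [tdiff Q2 hCB (halflines_measurable hC)]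
      have := congrArg Prod.snd hab; simp only at this; linarith
    rw [e1, e2]; simp
  by_cases hbc : (((Q1 B).toReal, (Q2 B).toReal) : ℝ × ℝ) = ((Q1 A).toReal, (Q2 A).toReal)
  · have e1 : (Q1 (A \ B)).toReal = 0 := by
      rw [tdiff Q1 hBA (halflines_measurable hB)]
      have := congrArg Prod.fst hbc; simp only at this; linarith
    have e2 : (Q2 (A \ B)).toReal = 0 := by
      rw [tdiff Q2 hBA (halflines_measurable hB)]
      have := congrArg Prod.snd hbc; simp only at this; linarith
    rw [e1, e2]; simp
  have h1 : (Q1 C).toReal ≤ (Q1 B).toReal :=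
    ENNReal.toReal_mono (measure_ne_top _ _) (measure_mono hCB)
  have h2 : (Q1 B).toReal ≤ (Q1 A).toReal :=
    ENNReal.toReal_mono (measure_ne_top _ _) (measure_mono hBA)
  have h3 : (Q2 C).toReal ≤ (Q2 B).toReal :=
    ENNReal.toReal_mono (measure_ne_top _ _) (measure_mono hCB)
  have h4 : (Q2 B).toReal ≤ (Q2 A).toReal :=
    ENNReal.toReal_mono (measure_ne_top _ _) (measure_mono hBA)
  have hac : (((Q1 C).toReal, (Q2 C).toReal) : ℝ × ℝ) ≠ ((Q1 A).toReal, (Q2 A).toReal) := by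
    intro hh
    apply hab
    have e1 := congrArg Prod.fst hh; have e2 := congrArg Prod.snd hh
    simp only at e1 e2
    have : (Q1 C).toReal = (Q1 B).toReal := le_antisymm h1 (by linarith)
    have : (Q2 C).toReal = (Q2 B).toReal := le_antisymm h3 (by linarith)
    simp_all
  have key := hroc ((Q1 C).toReal, (Q2 C).toReal) ((Q1 B).toReal, (Q2 B).toReal)
    ((Q1 A).toReal, (Q2 A).toReal) ⟨C, hC, rfl⟩ ⟨B, hB, rfl⟩ ⟨A, hA, rfl⟩
    hab hbc hac h1 h2 h3 h4
  simp only at key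
  rw [tdiff Q2 hBA (halflines_measurable hB), tdiff Q1 hCB (halflines_measurable hC),
    tdiff Q1 hBA (halflines_measurable hB), tdiff Q2 hCB (halflines_measurable hC)]
  linarith



lemma cross_Icc {Q1 Q2 : Measure ℝ} [IsProbabilityMeasure Q1] [IsProbabilityMeasure Q2]
    (hroc : ROCConcave Q1 Q2) {p q s t : ℝ} (hpq : p ≤ q) (hqs : q < s) (hst : s ≤ t) :
    (Q2 (Icc p q)).toReal * (Q1 (Icc s t)).toReal ≤
      (Q1 (Icc p q)).toReal * (Q2 (Icc s t)).toReal := by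
  have hIci : ∀ y : ℝ, Ici y ∈ Halflines := fun y => Or.inr (Or.inl ⟨y, rfl⟩)
  have hIoi : ∀ y : ℝ, Ioi y ∈ Halflines := fun y => Or.inl ⟨y, rfl⟩
  have hs1 : Ici s ⊆ Ioi q := fun x hx => lt_of_lt_of_le hqs hx
  have hs2 : Ioi q ⊆ Ici p := fun x hx => le_of_lt (lt_of_le_of_lt hpq hx)
  have hs3 : Ioi t ⊆ Ici s := fun x hx => hst.trans (le_of_lt hx)
  have hs4 : Ioi t ⊆ Ioi q := Ioi_subset_Ioi (hqs.le.trans hst)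
  have h1 := cross_of_roc hroc (hIci p) (hIoi q) (hIci s) hs1 hs2
  rw [Ici_diff_Ioi, Ioi_diff_Ici] at h1
  have h2 := cross_of_roc hroc (hIoi q) (hIci s) (hIoi t) hs3 hs1
  rw [Ioi_diff_Ici, Ici_diff_Ioi] at h2
  have h3 := cross_of_roc hroc (hIci p) (hIoi q) (hIoi t) hs4 hs2
  rw [Ici_diff_Ioi, Ioi_diff_Ioi] at h3
  have hdisj : Disjoint (Ioo q s) (Icc s t) :=
    Set.disjoint_left.mpr fun x hx hx' => absurd hx.2 (not_lt.mpr hx'.1)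
  have hsplit : ∀ Q : Measure ℝ, IsProbabilityMeasure Q →
      (Q (Ioc q t)).toReal = (Q (Ioo q s)).toReal + (Q (Icc s t)).toReal := by
    intro Q hQ
    rw [← Ioo_union_Icc_eq_Ioc hqs hst, measure_union hdisj measurableSet_Icc,
      ENNReal.toReal_add (measure_ne_top _ _) (measure_ne_top _ _)]
  rw [hsplit Q1 inferInstance, hsplit Q2 inferInstance] at h3
  set a1 := (Q1 (Icc p q)).toReal
  set a2 := (Q2 (Icc p q)).toReal
  set m1 := (Q1 (Ioo q s)).toReal
  set m2 := (Q2 (Ioo q s)).toReal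
  set j1 := (Q1 (Icc s t)).toReal
  set j2 := (Q2 (Icc s t)).toReal
  have ha2 : 0 ≤ a2 := ENNReal.toReal_nonneg
  have hj2 : 0 ≤ j2 := ENNReal.toReal_nonneg
  have hm2 : 0 ≤ m2 := ENNReal.toReal_nonneg
  have hm1' : 0 ≤ m1 := ENNReal.toReal_nonneg
  rcases eq_or_lt_of_le hm2 with hm | hm
  · -- m2 = 0
    have hm' : m2 = 0 := hm.symm
    rw [hm', mul_zero] at h1
    have e1 : a2 * m1 = 0 := le_antisymm h1 (mul_nonneg ha2 hm1')
    rw [hm'] at h3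
    nlinarith [h3, e1]
  · have key : m2 * (a2 * j1) ≤ m2 * (a1 * j2) := by
      nlinarith [mul_le_mul_of_nonneg_left h2 ha2, mul_le_mul_of_nonneg_right h1 hj2]
    exact le_of_mul_le_mul_left key hm

lemma cross_Icc_mu {Q1 Q2 : Measure ℝ} [IsProbabilityMeasure Q1] [IsProbabilityMeasure Q2]
    (hroc : ROCConcave Q1 Q2) {p q s t : ℝ} (hpq : p ≤ q) (hqs : q < s) (hst : s ≤ t) :
    Q2 (Icc p q) * (Q1 + Q2) (Icc s t) ≤ (Q1 + Q2) (Icc p q) * Q2 (Icc s t) := by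
  have h := cross_Icc hroc hpq hqs hst
  have hfin : ∀ S : Set ℝ, (Q1 + Q2) S ≠ ∞ := fun S => measure_ne_top _ _
  refine (ENNReal.toReal_le_toReal (ENNReal.mul_ne_top (measure_ne_top _ _) (hfin _))
    (ENNReal.mul_ne_top (hfin _) (measure_ne_top _ _))).mp ?_
  rw [ENNReal.toReal_mul, ENNReal.toReal_mul]
  have hadd : ∀ S : Set ℝ, ((Q1 + Q2) S).toReal = (Q1 S).toReal + (Q2 S).toReal := by
    intro S
    rw [Measure.add_apply, ENNReal.toReal_add (measure_ne_top _ _) (measure_ne_top _ _)]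
  rw [hadd, hadd]
  nlinarith [h]



lemma backward {Q1 Q2 : Measure ℝ} [IsProbabilityMeasure Q1] [IsProbabilityMeasure Q2]
    (hroc : ROCConcave Q1 Q2) : LikelihoodRatioLE Q1 Q2 := by
  set μ : Measure ℝ := Q1 + Q2 with hμdef
  have hle : Q2 ≤ μ := Measure.le_add_left le_rfl
  have hac : Q2 ≪ μ := Measure.absolutelyContinuous_of_le hle
  set f := Q2.rnDeriv μ with hfdef
  have htend := Besicovitch.ae_tendsto_rnDeriv Q2 μ
  have hle1 := Measure.rnDeriv_le_one_of_le hle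
  set T : Set ℝ := {x | Tendsto (fun r => Q2 (Metric.closedBall x r) / μ (Metric.closedBall x r))
      (𝓝[>] 0) (𝓝 (f x)) ∧ f x ≤ 1} with hTdef
  have hT : μ Tᶜ = 0 := by
    have h2 : ∀ᵐ x ∂μ, x ∈ T := by
      filter_upwards [htend, hle1] with x hx1 hx2
      exact ⟨hx1, hx2⟩
    simpa [ae_iff, hTdef, Set.compl_setOf] using h2
  set S : Set ℝ := {x | ∀ r : ℝ, 0 < r → 0 < μ (Metric.closedBall x r)} with hSdef
  have hS : μ Sᶜ = 0 := by
    apply measure_null_of_locally_null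
    intro x hx
    simp only [hSdef, mem_compl_iff, mem_setOf_eq, not_forall, not_lt] at hx
    obtain ⟨r, hr, h0⟩ := hx
    exact ⟨Metric.closedBall x r,
      mem_nhdsWithin_of_mem_nhds (Metric.closedBall_mem_nhds x hr),
      le_antisymm h0 zero_le⟩
  set A : Set ℝ := T ∩ S with hAdef
  have hA : μ Aᶜ = 0 := by
    rw [hAdef, Set.compl_inter]
    exact measure_union_null hT hS
  have hmonoA : ∀ x ∈ A, ∀ y ∈ A, x ≤ y → f x ≤ f y := by
    intro x hx y hy hxy
    rcases eq_or_lt_of_le hxy with rfl | hlt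
    · exact le_rfl
    refine le_of_tendsto_of_tendsto hx.1.1 hy.1.1 ?_
    have hmem : Ioo (0 : ℝ) ((y - x) / 2) ∈ 𝓝[>] (0 : ℝ) :=
      Ioo_mem_nhdsGT (by linarith)
    filter_upwards [hmem] with r hr
    have hr0 : 0 < r := hr.1
    have hxr : x + r < y - r := by have := hr.2; linarith
    have hcross := cross_Icc_mu hroc (p := x - r) (q := x + r) (s := y - r) (t := y + r)
      (by linarith) hxr (by linarith)
    have hμI : μ (Icc (x - r) (x + r)) ≠ 0 := by
      have := hx.2 r hr0; rw [Real.closedBall_eq_Icc] at this; exact this.ne'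
    have hμJ : μ (Icc (y - r) (y + r)) ≠ 0 := by
      have := hy.2 r hr0; rw [Real.closedBall_eq_Icc] at this; exact this.ne'
    simp only [Real.closedBall_eq_Icc]
    rw [← hμdef] at hcross
    have h' : Q2 (Icc (x - r) (x + r)) ≤
        μ (Icc (x - r) (x + r)) * Q2 (Icc (y - r) (y + r)) / μ (Icc (y - r) (y + r)) :=
      (ENNReal.le_div_iff_mul_le (Or.inl hμJ) (Or.inl (measure_ne_top _ _))).mpr hcross
    rw [ENNReal.div_le_iff hμI (measure_ne_top _ _)]
    calc Q2 (Icc (x - r) (x + r))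
        ≤ μ (Icc (x - r) (x + r)) * Q2 (Icc (y - r) (y + r)) / μ (Icc (y - r) (y + r)) := h'
      _ = Q2 (Icc (y - r) (y + r)) / μ (Icc (y - r) (y + r)) * μ (Icc (x - r) (x + r)) := by
          rw [mul_div_assoc, mul_comm]
  set g : ℝ → ℝ≥0∞ := fun x => ⨆ (a : ℝ) (_ : a ∈ A ∧ a ≤ x), f a with hgdef
  have hgmono : Monotone g := fun x y hxy =>
    biSup_mono fun a ha => ⟨ha.1, ha.2.trans hxy⟩
  have hgA : ∀ x ∈ A, g x = f x := by
    intro x hx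
    refine le_antisymm (iSup₂_le fun a ha => hmonoA a ha.1 x hx ha.2) ?_
    exact le_iSup₂ (f := fun (a : ℝ) (_ : a ∈ A ∧ a ≤ x) => f a) x ⟨hx, le_rfl⟩
  have hgle1 : ∀ x, g x ≤ 1 := fun x => iSup₂_le fun a ha => ha.1.1.2
  have hgae : g =ᵐ[μ] f := by
    refine Filter.eventuallyEq_of_mem (?_ : A ∈ ae μ) hgA
    rwa [mem_ae_iff]
  have hgmeas : Measurable g := hgmono.measurable
  have hQ2 : ∀ B : Set ℝ, MeasurableSet B → Q2 B = ∫⁻ x in B, g x ∂μ := by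
    intro B hB
    rw [lintegral_congr_ae (ae_restrict_of_ae hgae)]
    exact (Measure.setLIntegral_rnDeriv' hac hB).symm
  refine ⟨μ, fun x => 1 - g x, g, inferInstance,
    ⟨measurable_const.sub hgmeas, ?_⟩, ⟨hgmeas, hQ2⟩, ?_⟩
  · intro B hB
    have hfin : ∫⁻ x in B, g x ∂μ ≠ ∞ := by
      refine ne_top_of_le_ne_top (measure_ne_top μ B) ?_
      calc ∫⁻ x in B, g x ∂μ ≤ ∫⁻ _ in B, 1 ∂μ := lintegral_mono fun x => hgle1 x
        _ = μ B := setLIntegral_one B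
    have heq : ∫⁻ x in B, (1 - g x) ∂μ = μ B - Q2 B := by
      rw [lintegral_sub hgmeas hfin (Filter.Eventually.of_forall fun x => hgle1 x),
        setLIntegral_one, ← hQ2 B hB]
    rw [heq, hμdef, Measure.add_apply, ENNReal.add_sub_cancel_right (measure_ne_top Q2 B)]
  · intro x y hxy _ _
    exact ENNReal.div_le_div (hgmono hxy) (tsub_le_tsub_left (hgmono hxy) 1)


end StmtAux

theorem stmt_11 (Q1 Q2 : Measure ℝ) [IsProbabilityMeasure Q1] [IsProbabilityMeasure Q2] :
    LikelihoodRatioLE Q1 Q2 ↔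
    ∀ a b c : ℝ × ℝ, a ∈ ROC Q1 Q2 → b ∈ ROC Q1 Q2 → c ∈ ROC Q1 Q2 →
      a ≠ b → b ≠ c → a ≠ c →
      a.1 ≤ b.1 → b.1 ≤ c.1 → a.2 ≤ b.2 → b.2 ≤ c.2 →
      (c.2 - b.2) * (b.1 - a.1) ≤ (b.2 - a.2) * (c.1 - b.1) := by
  constructor
  · exact StmtAux.forward
  · exact fun h => StmtAux.backward h
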